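/- arXiv:2012.05156 — 6 statements merged into one kernel-verified Lean document; each statement's English description precedes it below -/
import Mathlib

section
/- Consider gradient flow ẇ(t) = -∇L(w(t)) on the single-neuron square loss L(w) = ½ Σᵢ (σ(⟨xᵢ, w⟩) - yᵢ)² with σ monotonically non-decreasing. If w(∞) := lim_{t→∞} w(t) exists and L(w(∞)) = 0, and w* is any minimizer of ‖w - w(0)‖ subject to L(w) = 0, then ‖w(∞) - w(0)‖ ≤ 2‖w* - w(0)‖. -/
open Filter

/-- If gradient flow on the single-neuron square loss with a monotonically non-decreasing
activation converges to a zero-loss point `w(∞)`, and `w*` is a minimal-distance zero-loss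
solution, then `‖w(∞) - w(0)‖ ≤ 2 ‖w* - w(0)‖`. -/
theorem stmt2 {d n : ℕ} (σ σ' : ℝ → ℝ) (hσ : Monotone σ) (hσ' : ∀ z, 0 ≤ σ' z)
    (x : Fin n → EuclideanSpace ℝ (Fin d)) (y : Fin n → ℝ)
    (L : EuclideanSpace ℝ (Fin d) → ℝ)
    (hL : ∀ u, L u = (1 / 2) * ∑ i, (σ (inner ℝ (x i) u) - y i) ^ 2)
    (w : ℝ → EuclideanSpace ℝ (Fin d))
    (hflow : ∀ t : ℝ, 0 ≤ t →
      HasDerivAt w (-(∑ i, ((σ (inner ℝ (x i) (w t)) - y i) * σ' (inner ℝ (x i) (w t))) • x i)) t)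
    (winf : EuclideanSpace ℝ (Fin d)) (hlim : Tendsto w atTop (nhds winf))
    (hinf : L winf = 0)
    (wstar : EuclideanSpace ℝ (Fin d)) (hstar : L wstar = 0)
    (hmin : ∀ u, L u = 0 → ‖wstar - w 0‖ ≤ ‖u - w 0‖) :
    ‖winf - w 0‖ ≤ 2 * ‖wstar - w 0‖ := by
  -- From L wstar = 0, each residual vanishes
  have hfit : ∀ i : Fin n, σ (inner ℝ (x i) wstar) = y i := by
    intro i
    have hsum : ∑ j, (σ ((inner ℝ (x j) wstar : ℝ)) - y j) ^ 2 = 0 := by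
      have := hstar
      rw [hL] at this
      linarith
    have := (Finset.sum_eq_zero_iff_of_nonneg (fun j _ => sq_nonneg _)).mp hsum i
      (Finset.mem_univ i)
    have := pow_eq_zero_iff (n := 2) (by norm_num) |>.mp this
    linarith
  set g : ℝ → ℝ := fun t => ‖w t - wstar‖ ^ 2 with hg
  -- derivative of g
  have hderiv : ∀ t : ℝ, 0 ≤ t → ∃ g' : ℝ, HasDerivAt g g' t ∧ g' ≤ 0 := by
    intro t ht
    set v : EuclideanSpace ℝ (Fin d) :=
      -(∑ i, ((σ (inner ℝ (x i) (w t)) - y i) * σ' (inner ℝ (x i) (w t))) • x i) with hv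
    have hw := hflow t ht
    have hu : HasDerivAt (fun s => w s - wstar) v t := hw.sub_const _
    have hinner : HasDerivAt (fun s => (inner ℝ (w s - wstar) (w s - wstar) : ℝ))
        ((inner ℝ (w t - wstar) v : ℝ) + (inner ℝ v (w t - wstar) : ℝ)) t :=
      hu.inner ℝ hu
    have hgder : HasDerivAt g
        ((inner ℝ (w t - wstar) v : ℝ) + (inner ℝ v (w t - wstar) : ℝ)) t := by
      have : g = fun s => (inner ℝ (w s - wstar) (w s - wstar) : ℝ) := by
        funext s
        exact (real_inner_self_eq_norm_sq _).symm
      rw [this]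
      exact hinner
    refine ⟨_, hgder, ?_⟩
    have hkey : (0:ℝ) ≤ inner ℝ (∑ i, ((σ (inner ℝ (x i) (w t)) - y i) * σ' (inner ℝ (x i) (w t))) • x i) (w t - wstar) := by
      rw [sum_inner]
      apply Finset.sum_nonneg
      intro i _
      rw [real_inner_smul_left, inner_sub_right]
      set a : ℝ := inner ℝ (x i) (w t)
      set b : ℝ := inner ℝ (x i) wstar
      have hyb : y i = σ b := (hfit i).symm
      rw [hyb]
      have hmono : 0 ≤ (σ a - σ b) * (a - b) := by
        rcases le_total a b with h | h
        · have h1 : σ a ≤ σ b := hσ h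
          nlinarith
        · have h1 : σ b ≤ σ a := hσ h
          nlinarith
      nlinarith [hσ' a, hmono]
    have h1 : (inner ℝ v (w t - wstar) : ℝ) ≤ 0 := by
      rw [hv, inner_neg_left]
      linarith
    have h2 : (inner ℝ (w t - wstar) v : ℝ) ≤ 0 := by
      rw [real_inner_comm]; exact h1
    linarith
  -- g is antitone on [0, ∞)
  have hanti : AntitoneOn g (Set.Ici (0:ℝ)) := by
    apply antitoneOn_of_deriv_nonpos (convex_Ici 0)
    · intro t ht
      obtain ⟨g', hgd, _⟩ := hderiv t ht
      exact (hgd.continuousAt).continuousWithinAt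
    · intro t ht
      rw [interior_Ici] at ht
      obtain ⟨g', hgd, _⟩ := hderiv t (le_of_lt ht)
      exact hgd.differentiableAt.differentiableWithinAt
    · intro t ht
      rw [interior_Ici] at ht
      obtain ⟨g', hgd, hle⟩ := hderiv t (le_of_lt ht)
      rw [hgd.deriv]
      exact hle
  -- pass to the limit
  have hbound : ‖winf - wstar‖ ≤ ‖w 0 - wstar‖ := by
    have hlim2 : Tendsto (fun t => ‖w t - wstar‖) atTop (nhds ‖winf - wstar‖) :=
      ((hlim.sub_const wstar).norm)
    refine le_of_tendsto hlim2 ?_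
    filter_upwards [eventually_ge_atTop (0:ℝ)] with t ht
    have hgt := hanti (Set.self_mem_Ici) ht ht
    simp only [hg] at hgt
    nlinarith [norm_nonneg (w t - wstar), norm_nonneg (w 0 - wstar)]
  calc ‖winf - w 0‖ = ‖(winf - wstar) + (wstar - w 0)‖ := by abel_nf
    _ ≤ ‖winf - wstar‖ + ‖wstar - w 0‖ := norm_add_le _ _
    _ ≤ ‖w 0 - wstar‖ + ‖wstar - w 0‖ := by linarith
    _ = 2 * ‖wstar - w 0‖ := by rw [norm_sub_rev]; ring
end

section
/- Balancedness invariance for a single-hidden-neuron ReLU network: let θ(t) = (w(t), v(t)) ∈ ℝ^d × ℝ follow gradient flow on L(w,v) = ½ Σᵢ (v·σ(⟨xᵢ,w⟩) - yᵢ)² where σ is the ReLU function. Then d/dt (‖w(t)‖² - v(t)²) = 0, i.e., ‖w(t)‖² - v(t)² is constant along the flow. -/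
/-- Balancedness invariance for a single-hidden-neuron ReLU network: along gradient flow
on `L(w,v) = ½ Σᵢ (v σ(⟨xᵢ,w⟩) - yᵢ)²` with `σ` the ReLU, the quantity `‖w‖² - v²` has
zero derivative. -/
theorem stmt5 {d n : ℕ} (σ σ' : ℝ → ℝ) (hσ : ∀ z, σ z = max z 0)
    (hσ' : ∀ z, σ' z * z = σ z)
    (x : Fin n → EuclideanSpace ℝ (Fin d)) (y : Fin n → ℝ)
    (w : ℝ → EuclideanSpace ℝ (Fin d)) (v : ℝ → ℝ)
    (hfloww : ∀ t : ℝ, HasDerivAt w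
      (-(∑ i, ((v t * σ (inner ℝ (x i) (w t)) - y i) * (v t * σ' (inner ℝ (x i) (w t)))) • x i)) t)
    (hflowv : ∀ t : ℝ, HasDerivAt v
      (-(∑ i, (v t * σ (inner ℝ (x i) (w t)) - y i) * σ (inner ℝ (x i) (w t)))) t) :
    ∀ t : ℝ, HasDerivAt (fun s => ‖w s‖ ^ 2 - (v s) ^ 2) 0 t := by
  intro t
  have hw := hfloww t
  have hv := hflowv t
  set w' := -(∑ i, ((v t * σ (inner ℝ (x i) (w t)) - y i) * (v t * σ' (inner ℝ (x i) (w t)))) • x i)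
    with hw'def
  set v' := -(∑ i, (v t * σ (inner ℝ (x i) (w t)) - y i) * σ (inner ℝ (x i) (w t))) with hv'def
  have h1 : HasDerivAt (fun s => ‖w s‖ ^ 2) ((inner ℝ (w t) w' : ℝ) + inner ℝ w' (w t)) t := by
    have := HasDerivAt.inner (𝕜 := ℝ) hw hw
    simpa only [real_inner_self_eq_norm_sq] using this
  have h2 : HasDerivAt (fun s => (v s) ^ 2) (2 * v t ^ 1 * v') t := hv.pow 2
  have hA : (inner ℝ (w t) w' : ℝ)
      = -∑ i, v t * ((v t * σ (inner ℝ (x i) (w t)) - y i) * σ (inner ℝ (x i) (w t))) := by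
    rw [hw'def, inner_neg_right, inner_sum]
    congr 1
    refine Finset.sum_congr rfl fun i _ => ?_
    rw [real_inner_smul_right]
    have hc : (inner ℝ (w t) (x i) : ℝ) = inner ℝ (x i) (w t) := real_inner_comm _ _
    linear_combination (v t * (v t * σ ((inner ℝ (x i) (w t) : ℝ)) - y i) * σ' (inner ℝ (x i) (w t))) * hc
      + (v t * (v t * σ ((inner ℝ (x i) (w t) : ℝ)) - y i)) * hσ' (inner ℝ (x i) (w t))
  have hB : (inner ℝ w' (w t) : ℝ)
      = -∑ i, v t * ((v t * σ (inner ℝ (x i) (w t)) - y i) * σ (inner ℝ (x i) (w t))) := by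
    rw [hw'def, inner_neg_left, sum_inner]
    congr 1
    refine Finset.sum_congr rfl fun i _ => ?_
    rw [real_inner_smul_left]
    linear_combination (v t * (v t * σ ((inner ℝ (x i) (w t) : ℝ)) - y i)) * hσ' (inner ℝ (x i) (w t))
  have hz : ((inner ℝ (w t) w' : ℝ) + inner ℝ w' (w t)) - 2 * v t ^ 1 * v' = 0 := by
    rw [hA, hB, hv'def, ← Finset.mul_sum]
    ring
  have := h1.sub h2
  rw [hz] at this
  exact this
end

section
/- Radiality lemma: let q, c > 0, d ≥ 3, and let R : ℝ^d → ℝ satisfy: for every α > 0, every w ∈ ℝ^d with ‖w‖ = αq, and every v ∈ ℝ^d with ‖v‖ = αc and ⟨w, v⟩ = 0, one has R(w) = R(w + v). Then R is radial on ℝ^d ∖ {0}: there is f : ℝ₊ → ℝ with R(w) = f(‖w‖) for every w ≠ 0. -/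
open Module

variable {d : ℕ}

lemma exists_orth (hd : 3 ≤ d) (w w' : EuclideanSpace ℝ (Fin d)) :
    ∃ u : EuclideanSpace ℝ (Fin d), u ≠ 0 ∧ (inner ℝ w u : ℝ) = 0 ∧ (inner ℝ w' u : ℝ) = 0 := by
  set K := Submodule.span ℝ ({w, w'} : Set (EuclideanSpace ℝ (Fin d)))
  have hK : finrank ℝ K ≤ 2 := by
    classical
    have h1 : ({w, w'} : Set (EuclideanSpace ℝ (Fin d))) = ↑({w, w'} : Finset (EuclideanSpace ℝ (Fin d))) := by simp
    have := finrank_span_finset_le_card (R := ℝ) ({w, w'} : Finset (EuclideanSpace ℝ (Fin d)))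
    rw [show K = Submodule.span ℝ (({w, w'} : Finset (EuclideanSpace ℝ (Fin d))) : Set _) from by simp [K]]
    refine this.trans ?_
    exact (Finset.card_insert_le _ _).trans (by simp)
  have htot : finrank ℝ (EuclideanSpace ℝ (Fin d)) = d := by simp
  have h2 : 0 < finrank ℝ Kᗮ := by
    have := Submodule.finrank_add_finrank_orthogonal K
    omega
  obtain ⟨u, huK, hu0⟩ := Submodule.exists_mem_ne_zero_of_ne_bot (p := Kᗮ)
    (by
      intro h
      rw [h] at h2
      simp at h2)
  refine ⟨u, hu0, ?_, ?_⟩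
  · exact (Submodule.mem_orthogonal K u).mp huK w (Submodule.subset_span (by simp))
  · exact (Submodule.mem_orthogonal K u).mp huK w' (Submodule.subset_span (by simp))


set_option maxHeartbeats 800000 in
lemma key (hd : 3 ≤ d) (q c : ℝ) (hq : 0 < q) (hc : 0 < c)
    (R : EuclideanSpace ℝ (Fin d) → ℝ)
    (hR : ∀ α : ℝ, 0 < α → ∀ w : EuclideanSpace ℝ (Fin d), ‖w‖ = α * q →
      ∀ v : EuclideanSpace ℝ (Fin d), ‖v‖ = α * c → (inner ℝ w v : ℝ) = 0 →
        R w = R (w + v))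
    (r : ℝ) (hr : 0 < r) (w w' : EuclideanSpace ℝ (Fin d))
    (hw : ‖w‖ = r) (hw' : ‖w'‖ = r)
    (hclose : ‖w - w'‖ ^ 2 * (q ^ 2 + c ^ 2) < 4 * c ^ 2 * r ^ 2) :
    R w = R w' := by
  obtain ⟨t, ht⟩ : ∃ t : ℝ, (inner ℝ w w' : ℝ) = t := ⟨_, rfl⟩
  have ht' : (inner ℝ w' w : ℝ) = t := by rw [real_inner_comm]; exact ht
  have hww : (inner ℝ w w : ℝ) = r ^ 2 := by rw [real_inner_self_eq_norm_sq, hw]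
  have hw'w' : (inner ℝ w' w' : ℝ) = r ^ 2 := by rw [real_inner_self_eq_norm_sq, hw']
  have hδ : ‖w - w'‖ ^ 2 = 2 * r ^ 2 - 2 * t := by
    rw [norm_sub_sq_real, hw, hw', ht]; ring
  have hδ0 : (0:ℝ) ≤ 2 * r ^ 2 - 2 * t := hδ ▸ sq_nonneg _
  rw [hδ] at hclose
  have hA : c ^ 2 * (2 * r ^ 2 - 2 * t) < 4 * c ^ 2 * r ^ 2 := by
    nlinarith [mul_nonneg (sq_nonneg q) hδ0]
  have hden : 0 < r ^ 2 + t := by nlinarith [hA, mul_pos hc hc, sq_nonneg c]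
  obtain ⟨s2, hs2def⟩ : ∃ s2 : ℝ,
      s2 = (r / q) ^ 2 * c ^ 2 - r ^ 2 * (r ^ 2 - t) / (r ^ 2 + t) := ⟨_, rfl⟩
  have hs2eq : s2 = (r ^ 2 * c ^ 2 * (r ^ 2 + t) - r ^ 2 * (r ^ 2 - t) * q ^ 2) /
      (q ^ 2 * (r ^ 2 + t)) := by
    rw [hs2def]; field_simp
  have hs2 : 0 ≤ s2 := by
    have h := mul_nonneg (sq_nonneg r)
      (by linarith : (0:ℝ) ≤ 4 * c ^ 2 * r ^ 2 - (2 * r ^ 2 - 2 * t) * (q ^ 2 + c ^ 2))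
    exact hs2eq ▸ div_nonneg (by nlinarith [h]) (by positivity)
  obtain ⟨u, hu0, huw, huw'⟩ := exists_orth hd w w'
  have hnu : ‖u‖ ≠ 0 := norm_ne_zero_iff.mpr hu0
  obtain ⟨u₀, hu₀⟩ : ∃ u₀ : EuclideanSpace ℝ (Fin d),
      u₀ = (Real.sqrt s2 / ‖u‖) • u := ⟨_, rfl⟩
  have hu₀w : (inner ℝ w u₀ : ℝ) = 0 := by rw [hu₀, real_inner_smul_right, huw]; ring
  have hu₀w' : (inner ℝ w' u₀ : ℝ) = 0 := by rw [hu₀, real_inner_smul_right, huw']; ring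
  have hu₀u₀ : (inner ℝ u₀ u₀ : ℝ) = s2 := by
    rw [real_inner_self_eq_norm_sq, hu₀, norm_smul, Real.norm_eq_abs, abs_div, abs_norm,
      div_mul_cancel₀ _ hnu, sq_abs, Real.sq_sqrt hs2]
  obtain ⟨μ, hμ⟩ : ∃ μ : ℝ, μ = r ^ 2 / (r ^ 2 + t) := ⟨_, rfl⟩
  have hμ1 : μ * (r ^ 2 + t) = r ^ 2 := by rw [hμ]; exact div_mul_cancel₀ _ (ne_of_gt hden)
  obtain ⟨a, ha⟩ : ∃ a : EuclideanSpace ℝ (Fin d), a = (μ - 1) • w + μ • w' := ⟨_, rfl⟩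
  obtain ⟨a', ha'⟩ : ∃ a' : EuclideanSpace ℝ (Fin d), a' = μ • w + (μ - 1) • w' := ⟨_, rfl⟩
  have haw : (inner ℝ w a : ℝ) = (μ - 1) * r ^ 2 + μ * t := by
    rw [ha, inner_add_right, real_inner_smul_right, real_inner_smul_right, hww, ht]
  have haw' : (inner ℝ w' a' : ℝ) = μ * t + (μ - 1) * r ^ 2 := by
    rw [ha', inner_add_right, real_inner_smul_right, real_inner_smul_right, hw'w', ht']
  have hau : (inner ℝ a u₀ : ℝ) = 0 := by
    rw [ha, inner_add_left, real_inner_smul_left, real_inner_smul_left, hu₀w, hu₀w']; ring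
  have ha'u : (inner ℝ a' u₀ : ℝ) = 0 := by
    rw [ha', inner_add_left, real_inner_smul_left, real_inner_smul_left, hu₀w, hu₀w']; ring
  have haa : (inner ℝ a a : ℝ) = (μ - 1) ^ 2 * r ^ 2 + 2 * ((μ - 1) * μ * t) + μ ^ 2 * r ^ 2 := by
    rw [ha, real_inner_add_add_self, real_inner_smul_left, real_inner_smul_right,
      real_inner_smul_left, real_inner_smul_right, real_inner_smul_left, real_inner_smul_right,
      hww, hw'w', ht]; ring
  have ha'a' : (inner ℝ a' a' : ℝ) = (μ - 1) ^ 2 * r ^ 2 + 2 * ((μ - 1) * μ * t) + μ ^ 2 * r ^ 2 := by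
    rw [ha', real_inner_add_add_self, real_inner_smul_left, real_inner_smul_right,
      real_inner_smul_left, real_inner_smul_right, real_inner_smul_left, real_inner_smul_right,
      hww, hw'w', ht]; ring
  have hmid : (μ - 1) ^ 2 * r ^ 2 + 2 * ((μ - 1) * μ * t) + μ ^ 2 * r ^ 2
      = r ^ 2 * (r ^ 2 - t) / (r ^ 2 + t) := by
    rw [hμ]; field_simp; ring
  have hsum : w + (a + u₀) = w' + (a' + u₀) := by rw [ha, ha']; module
  have hiw : (inner ℝ w (a + u₀) : ℝ) = 0 := by
    rw [inner_add_right, haw, hu₀w]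
    linear_combination hμ1
  have hiw' : (inner ℝ w' (a' + u₀) : ℝ) = 0 := by
    rw [inner_add_right, haw', hu₀w']
    linear_combination hμ1
  have hα : 0 < r / q := by positivity
  have hnv : ‖a + u₀‖ = (r / q) * c := by
    have h1 : ‖a + u₀‖ ^ 2 = ((r / q) * c) ^ 2 := by
      rw [← real_inner_self_eq_norm_sq, real_inner_add_add_self, hau, haa, hu₀u₀, hs2def, hmid]
      ring
    have h2 : 0 ≤ (r / q) * c := by positivity
    calc ‖a + u₀‖ = Real.sqrt (‖a + u₀‖ ^ 2) := (Real.sqrt_sq (norm_nonneg _)).symm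
      _ = Real.sqrt (((r / q) * c) ^ 2) := by rw [h1]
      _ = (r / q) * c := Real.sqrt_sq h2
  have hnv' : ‖a' + u₀‖ = (r / q) * c := by
    have h1 : ‖a' + u₀‖ ^ 2 = ((r / q) * c) ^ 2 := by
      rw [← real_inner_self_eq_norm_sq, real_inner_add_add_self, ha'u, ha'a', hu₀u₀, hs2def, hmid]
      ring
    have h2 : 0 ≤ (r / q) * c := by positivity
    calc ‖a' + u₀‖ = Real.sqrt (‖a' + u₀‖ ^ 2) := (Real.sqrt_sq (norm_nonneg _)).symm
      _ = Real.sqrt (((r / q) * c) ^ 2) := by rw [h1]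
      _ = (r / q) * c := Real.sqrt_sq h2
  have e1 := hR (r / q) hα w (by rw [hw, div_mul_cancel₀ _ (ne_of_gt hq)]) (a + u₀) hnv hiw
  have e2 := hR (r / q) hα w' (by rw [hw', div_mul_cancel₀ _ (ne_of_gt hq)]) (a' + u₀) hnv' hiw'
  rw [e1, e2, hsum]



/-- Radiality lemma: if `R : ℝ^d → ℝ` (with `d ≥ 3`) satisfies `R(w) = R(w+v)` for every
`α > 0`, `‖w‖ = αq`, `‖v‖ = αc`, `⟨w,v⟩ = 0`, then `R` is radial on `ℝ^d ∖ {0}`. -/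
theorem stmt7 {d : ℕ} (hd : 3 ≤ d) (q c : ℝ) (hq : 0 < q) (hc : 0 < c)
    (R : EuclideanSpace ℝ (Fin d) → ℝ)
    (hR : ∀ α : ℝ, 0 < α → ∀ w : EuclideanSpace ℝ (Fin d), ‖w‖ = α * q →
      ∀ v : EuclideanSpace ℝ (Fin d), ‖v‖ = α * c → (inner ℝ w v : ℝ) = 0 →
        R w = R (w + v)) :
    ∃ f : ℝ → ℝ, ∀ w : EuclideanSpace ℝ (Fin d), w ≠ 0 → R w = f ‖w‖ := by
  classical
  have hconst : ∀ r : ℝ, 0 < r → ∀ w₀ w₁ : EuclideanSpace ℝ (Fin d),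
      ‖w₀‖ = r → ‖w₁‖ = r → R w₀ = R w₁ := by
    intro r hr w₀ w₁ hw₀ hw₁
    set ρ : ℝ := c * r / (q + c) with hρdef
    have hρ : 0 < ρ := by positivity
    have step : ∀ x y : EuclideanSpace ℝ (Fin d), ‖x‖ = r → ‖y‖ = r →
        ‖x - y‖ < ρ → R x = R y := by
      intro x y hx hy hxy
      refine key hd q c hq hc R hR r hr x y hx hy ?_
      have h0 : 0 ≤ ‖x - y‖ := norm_nonneg _
      have h1 : ‖x - y‖ ^ 2 < ρ ^ 2 := by nlinarith
      have h2 : ρ ^ 2 * (q ^ 2 + c ^ 2) < 4 * c ^ 2 * r ^ 2 := by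
        rw [hρdef, div_pow, div_mul_eq_mul_div, div_lt_iff₀ (by positivity)]
        have hcr : (0:ℝ) < c ^ 2 * r ^ 2 := by positivity
        have hqc : q ^ 2 + c ^ 2 < 4 * (q + c) ^ 2 := by nlinarith [mul_pos hq hc, sq_nonneg q, sq_nonneg c]
        nlinarith [mul_lt_mul_of_pos_left hqc hcr]
      nlinarith [sq_nonneg (q ^ 2 + c ^ 2), sq_nonneg q, sq_nonneg c]
    by_contra hne
    have hrank : 1 < Module.rank ℝ (EuclideanSpace ℝ (Fin d)) := by
      rw [← Module.finrank_eq_rank]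
      have : Module.finrank ℝ (EuclideanSpace ℝ (Fin d)) = d := by simp
      rw [this]
      exact_mod_cast (by omega : 1 < d)
    have hcon : IsPreconnected (Metric.sphere (0 : EuclideanSpace ℝ (Fin d)) r) :=
      (isConnected_sphere hrank 0 hr.le).isPreconnected
    set S := Metric.sphere (0 : EuclideanSpace ℝ (Fin d)) r with hS
    have hmemS : ∀ x : EuclideanSpace ℝ (Fin d), x ∈ S ↔ ‖x‖ = r := by
      intro x; simp [hS, Metric.mem_sphere, dist_eq_norm]
    set U : Set (EuclideanSpace ℝ (Fin d)) :=
      ⋃ x ∈ {x | x ∈ S ∧ R x = R w₀}, Metric.ball x ρ with hU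
    set V : Set (EuclideanSpace ℝ (Fin d)) :=
      ⋃ x ∈ {x | x ∈ S ∧ R x ≠ R w₀}, Metric.ball x ρ with hV
    have hUopen : IsOpen U := isOpen_biUnion fun _ _ => Metric.isOpen_ball
    have hVopen : IsOpen V := isOpen_biUnion fun _ _ => Metric.isOpen_ball
    have hcover : S ⊆ U ∪ V := by
      intro x hx
      by_cases hRx : R x = R w₀
      · exact Or.inl (Set.mem_biUnion ⟨hx, hRx⟩ (Metric.mem_ball_self hρ))
      · exact Or.inr (Set.mem_biUnion ⟨hx, hRx⟩ (Metric.mem_ball_self hρ))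
    have hUne : (S ∩ U).Nonempty := by
      refine ⟨w₀, (hmemS w₀).mpr hw₀, ?_⟩
      exact Set.mem_biUnion ⟨(hmemS w₀).mpr hw₀, rfl⟩ (Metric.mem_ball_self hρ)
    have hVne : (S ∩ V).Nonempty := by
      refine ⟨w₁, (hmemS w₁).mpr hw₁, ?_⟩
      exact Set.mem_biUnion ⟨(hmemS w₁).mpr hw₁, fun h => hne h.symm⟩ (Metric.mem_ball_self hρ)
    obtain ⟨y, hyS, hyU, hyV⟩ := hcon U V hUopen hVopen hcover hUne hVne
    obtain ⟨x, ⟨hxS, hxR⟩, hyx⟩ := Set.mem_iUnion₂.mp hyU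
    obtain ⟨x', ⟨hx'S, hx'R⟩, hyx'⟩ := Set.mem_iUnion₂.mp hyV
    have h1 : R x = R y := step x y ((hmemS x).mp hxS) ((hmemS y).mp hyS)
      (by rw [← dist_eq_norm, dist_comm]; exact Metric.mem_ball.mp hyx)
    have h2 : R x' = R y := step x' y ((hmemS x').mp hx'S) ((hmemS y).mp hyS)
      (by rw [← dist_eq_norm, dist_comm]; exact Metric.mem_ball.mp hyx')
    exact hx'R (h2.trans (h1.symm.trans hxR))
  set e : EuclideanSpace ℝ (Fin d) := EuclideanSpace.single (⟨0, by omega⟩ : Fin d) (1 : ℝ)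
    with he
  have hnorme : ‖e‖ = 1 := by rw [he, EuclideanSpace.norm_single]; norm_num
  refine ⟨fun ρ => R (ρ • e), fun w hw => ?_⟩
  have hwpos : 0 < ‖w‖ := norm_pos_iff.mpr hw
  have hnorm : ‖(‖w‖ : ℝ) • e‖ = ‖w‖ := by
    rw [norm_smul, Real.norm_eq_abs, abs_of_nonneg hwpos.le, hnorme, mul_one]
  exact hconst ‖w‖ hwpos w (‖w‖ • e) rfl hnorm
end

section
/- Constancy lemma: let q, c > 0, d ≥ 3, and let R : ℝ^d → ℝ be a function such that for every α > 0, every vector w ∈ ℝ^d with ‖w‖ = αq, and every vector v ∈ ℝ^d with ‖v‖ = αc and ⟨w, v⟩ = 0, one has R(w) = R(w + v) = min_{β ≥ 0} R(w + βv). Then R(w) = R(w') for all w, w' ∈ ℝ^d ∖ {0}. -/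
open Submodule in
lemma stmt8_ortho {d : ℕ} (hd : 3 ≤ d) (w w' : EuclideanSpace ℝ (Fin d)) :
    ∃ e : EuclideanSpace ℝ (Fin d), ‖e‖ = 1 ∧ (inner ℝ w e : ℝ) = 0 ∧ (inner ℝ w' e : ℝ) = 0 := by
  classical
  set K : Submodule ℝ (EuclideanSpace ℝ (Fin d)) := span ℝ {w, w'} with hKdef
  have hK : Module.finrank ℝ K ≤ 2 := by
    have h := finrank_span_le_card (R := ℝ) ({w, w'} : Set (EuclideanSpace ℝ (Fin d)))
    refine h.trans ?_
    have : ({w, w'} : Set (EuclideanSpace ℝ (Fin d))).toFinset.card ≤ 2 := by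
      rw [Set.toFinset_insert, Set.toFinset_singleton]
      exact (Finset.card_insert_le _ _).trans (by simp)
    simpa using this
  have horth : Kᗮ ≠ ⊥ := by
    intro h
    have h1 : Module.finrank ℝ K + Module.finrank ℝ Kᗮ = d := by
      rw [Submodule.finrank_add_finrank_orthogonal]
      simp [finrank_euclideanSpace_fin]
    rw [h, finrank_bot] at h1
    omega
  obtain ⟨x, hx, hx0⟩ := Submodule.exists_mem_ne_zero_of_ne_bot horth
  have hwK : w ∈ K := subset_span (by simp)
  have hw'K : w' ∈ K := subset_span (by simp)
  have h1 : (inner ℝ w x : ℝ) = 0 := (Submodule.mem_orthogonal K x).mp hx w hwK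
  have h2 : (inner ℝ w' x : ℝ) = 0 := (Submodule.mem_orthogonal K x).mp hx w' hw'K
  exact ⟨‖x‖⁻¹ • x, by simp [norm_smul, norm_ne_zero_iff.mpr hx0],
    by rw [real_inner_smul_right, h1]; ring,
    by rw [real_inner_smul_right, h2]; ring⟩

variable {d : ℕ} (q c : ℝ) (R : EuclideanSpace ℝ (Fin d) → ℝ)

lemma stmt8_key (hq : 0 < q) (hc : 0 < c)
    (hR : ∀ α : ℝ, 0 < α → ∀ w : EuclideanSpace ℝ (Fin d), ‖w‖ = α * q →
      ∀ v : EuclideanSpace ℝ (Fin d), ‖v‖ = α * c → (inner ℝ w v : ℝ) = 0 →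
        R w = R (w + v) ∧ ∀ β : ℝ, 0 ≤ β → R w ≤ R (w + β • v))
    (w u : EuclideanSpace ℝ (Fin d)) (hw : w ≠ 0)
    (h1 : (inner ℝ w u : ℝ) = ‖w‖ ^ 2)
    (h2 : ‖u‖ ^ 2 = (1 + c ^ 2 / q ^ 2) * ‖w‖ ^ 2) :
    R w = R u := by
  have hwn : 0 < ‖w‖ := norm_pos_iff.mpr hw
  set v := u - w with hv
  have hiv : (inner ℝ w v : ℝ) = 0 := by
    rw [hv, inner_sub_right, h1, real_inner_self_eq_norm_sq]; ring
  have hnv : ‖v‖ = (‖w‖ / q) * c := by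
    have hx : ‖v‖ ^ 2 = ((‖w‖ / q) * c) ^ 2 := by
      rw [hv, norm_sub_sq_real, real_inner_comm, h1, h2]
      field_simp
      ring
    exact (pow_left_inj₀ (norm_nonneg v) (by positivity) (by norm_num)).mp hx
  have hα : 0 < ‖w‖ / q := div_pos hwn hq
  have := (hR (‖w‖ / q) hα w (by field_simp) v hnv hiv).1
  simpa [hv] using this

lemma stmt8_mono (hq : 0 < q) (hc : 0 < c)
    (hR : ∀ α : ℝ, 0 < α → ∀ w : EuclideanSpace ℝ (Fin d), ‖w‖ = α * q →
      ∀ v : EuclideanSpace ℝ (Fin d), ‖v‖ = α * c → (inner ℝ w v : ℝ) = 0 →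
        R w = R (w + v) ∧ ∀ β : ℝ, 0 ≤ β → R w ≤ R (w + β • v))
    (w u : EuclideanSpace ℝ (Fin d)) (hw : w ≠ 0)
    (h1 : (inner ℝ w u : ℝ) = ‖w‖ ^ 2) :
    R w ≤ R u := by
  have hwn : 0 < ‖w‖ := norm_pos_iff.mpr hw
  set v := u - w with hv
  have hiv : (inner ℝ w v : ℝ) = 0 := by
    rw [hv, inner_sub_right, h1, real_inner_self_eq_norm_sq]; ring
  by_cases hv0 : v = 0
  · have : u = w := by rwa [hv, sub_eq_zero] at hv0
    rw [this]
  · have hvn : 0 < ‖v‖ := norm_pos_iff.mpr hv0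
    have hα : 0 < ‖w‖ / q := div_pos hwn hq
    set α := ‖w‖ / q with hαd
    set v₀ : EuclideanSpace ℝ (Fin d) := ((α * c) / ‖v‖) • v with hv₀
    have hc0 : 0 < α * c := mul_pos hα hc
    have hn0 : ‖v₀‖ = α * c := by
      rw [hv₀, norm_smul, Real.norm_eq_abs, abs_of_pos (div_pos hc0 hvn),
        div_mul_cancel₀ _ (ne_of_gt hvn)]
    have hi0 : (inner ℝ w v₀ : ℝ) = 0 := by rw [hv₀, real_inner_smul_right, hiv]; ring
    have h := (hR α hα w (by rw [hαd, div_mul_cancel₀ _ (ne_of_gt hq)]) v₀ hn0 hi0).2 (‖v‖ / (α * c)) (le_of_lt (div_pos hvn hc0))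
    have : (‖v‖ / (α * c)) • v₀ = v := by
      rw [hv₀, smul_smul]
      have h9 : ‖v‖ / (α * c) * (α * c / ‖v‖) = 1 := by
        field_simp
      rw [h9, one_smul]
    rw [this] at h
    simpa [hv] using h

lemma stmt8_close (hd : 3 ≤ d) (q c : ℝ) (R : EuclideanSpace ℝ (Fin d) → ℝ)
    (hq : 0 < q) (hc : 0 < c)
    (hkey : ∀ w u : EuclideanSpace ℝ (Fin d), w ≠ 0 → (inner ℝ w u : ℝ) = ‖w‖ ^ 2 →
      ‖u‖ ^ 2 = (1 + c ^ 2 / q ^ 2) * ‖w‖ ^ 2 → R w = R u)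
    (hortho : ∀ w w' : EuclideanSpace ℝ (Fin d),
      ∃ e : EuclideanSpace ℝ (Fin d), ‖e‖ = 1 ∧ (inner ℝ w e : ℝ) = 0 ∧ (inner ℝ w' e : ℝ) = 0)
    (w w' : EuclideanSpace ℝ (Fin d)) (r : ℝ) (hr : 0 < r)
    (hwr : ‖w‖ = r) (hw'r : ‖w'‖ = r)
    (hp : 2 * r ^ 2 ≤ (1 + c ^ 2 / q ^ 2) * (r ^ 2 + (inner ℝ w w' : ℝ))) :
    R w = R w' := by
  set K : ℝ := 1 + c ^ 2 / q ^ 2 with hK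
  have hK1 : 1 < K := by
    have : 0 < c ^ 2 / q ^ 2 := by positivity
    rw [hK]; linarith
  have hcomm : (inner ℝ w' w : ℝ) = (inner ℝ w w' : ℝ) := real_inner_comm w w'
  set p : ℝ := (inner ℝ w w' : ℝ) with hpd
  clear_value K p
  have hrp : 0 < r ^ 2 + p := by nlinarith [sq_nonneg r]
  set a : ℝ := r ^ 2 / (r ^ 2 + p) with ha
  obtain ⟨n, hn1, hnw, hnw'⟩ := hortho w w'
  have hsarg : 0 ≤ K * r ^ 2 - 2 * r ^ 4 / (r ^ 2 + p) := by
    rw [sub_nonneg, div_le_iff₀ hrp]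
    nlinarith [sq_nonneg r]
  obtain ⟨s, hs2⟩ : ∃ s : ℝ, s ^ 2 = K * r ^ 2 - 2 * r ^ 4 / (r ^ 2 + p) :=
    ⟨Real.sqrt _, Real.sq_sqrt hsarg⟩
  set u : EuclideanSpace ℝ (Fin d) := a • (w + w') + s • n with hu
  have hfin : a * (r ^ 2 + p) = r ^ 2 := by
    rw [ha, div_mul_cancel₀ _ (ne_of_gt hrp)]
  have hwu : (inner ℝ w u : ℝ) = r ^ 2 := by
    rw [hu]
    simp only [inner_add_right, real_inner_smul_right, real_inner_self_eq_norm_sq, hwr, hnw,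
      ← hpd]
    linear_combination hfin
  have hw'u : (inner ℝ w' u : ℝ) = r ^ 2 := by
    rw [hu]
    simp only [inner_add_right, real_inner_smul_right, real_inner_self_eq_norm_sq, hw'r, hnw',
      hcomm, ← hpd]
    linear_combination hfin
  have hsum : ‖w + w'‖ ^ 2 = 2 * r ^ 2 + 2 * p := by
    rw [norm_add_sq_real, hwr, hw'r, ← hpd]; ring
  have hcross : (inner ℝ ((a : ℝ) • (w + w')) (s • n) : ℝ) = 0 := by
    rw [real_inner_smul_left, real_inner_smul_right, inner_add_left, hnw, hnw']
    ring
  have hun : ‖u‖ ^ 2 = K * r ^ 2 := by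
    rw [hu, norm_add_sq_real, hcross, norm_smul, norm_smul, mul_pow, mul_pow, hsum, hn1,
      Real.norm_eq_abs, Real.norm_eq_abs, sq_abs, sq_abs, ha, hs2]
    field_simp
    ring
  have hw0 : w ≠ 0 := by
    intro h; rw [h, norm_zero] at hwr; exact absurd hwr.symm (ne_of_gt hr)
  have hw'0 : w' ≠ 0 := by
    intro h; rw [h, norm_zero] at hw'r; exact absurd hw'r.symm (ne_of_gt hr)
  have e1 : R w = R u := hkey w u hw0 (by rw [hwu, hwr]) (by rw [hun, hwr])
  have e2 : R w' = R u := hkey w' u hw'0 (by rw [hw'u, hw'r]) (by rw [hun, hw'r])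
  rw [e1, e2]

lemma stmt8_radunit (q c : ℝ) (R : EuclideanSpace ℝ (Fin d) → ℝ) (hq : 0 < q) (hc : 0 < c)
    (hclose : ∀ w w' : EuclideanSpace ℝ (Fin d), ∀ r : ℝ, 0 < r → ‖w‖ = r → ‖w'‖ = r →
      2 * r ^ 2 ≤ (1 + c ^ 2 / q ^ 2) * (r ^ 2 + (inner ℝ w w' : ℝ)) → R w = R w')
    (r : ℝ) (hr : 0 < r) (e n : EuclideanSpace ℝ (Fin d))
    (he1 : ‖e‖ = 1) (hn1 : ‖n‖ = 1) (hen : (inner ℝ e n : ℝ) = 0)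
    (Θ : ℝ) (hΘ0 : 0 ≤ Θ) (hΘπ : Θ ≤ Real.pi) :
    R (r • e) = R (r • (Real.cos Θ • e + Real.sin Θ • n)) := by
  set K : ℝ := 1 + c ^ 2 / q ^ 2 with hK
  have hK1 : 1 < K := by
    have : 0 < c ^ 2 / q ^ 2 := by positivity
    rw [hK]; linarith
  have hK0 : 0 < K := by linarith
  set ε : ℝ := 2 - 2 / K with hε
  have hε0 : 0 < ε := by
    have : 2 / K < 2 := by
      rw [div_lt_iff₀ hK0]; nlinarith
    rw [hε]; linarith
  -- inner products of points on the circle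
  have hne : (inner ℝ n e : ℝ) = 0 := by rw [real_inner_comm, hen]
  have hip : ∀ a b : ℝ, (inner ℝ (Real.cos a • e + Real.sin a • n)
      (Real.cos b • e + Real.sin b • n) : ℝ) = Real.cos (a - b) := by
    intro a b
    simp only [inner_add_left, inner_add_right, real_inner_smul_left, real_inner_smul_right,
      real_inner_self_eq_norm_sq, he1, hn1, hen, hne, one_pow]
    rw [Real.cos_sub]
    ring
  have hnorm : ∀ a : ℝ, ‖Real.cos a • e + Real.sin a • n‖ = 1 := by
    intro a
    have h2 : ‖Real.cos a • e + Real.sin a • n‖ ^ 2 = 1 := by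
      rw [← real_inner_self_eq_norm_sq, hip a a, sub_self, Real.cos_zero]
    have := (pow_left_inj₀ (norm_nonneg _) (by norm_num : (0:ℝ) ≤ 1) (by norm_num : 2 ≠ 0)).mp
      (by rw [h2]; norm_num)
    exact this
  -- choose number of steps
  set N : ℕ := ⌈Real.pi / Real.sqrt (2 * ε)⌉₊ + 1 with hN
  have hNpos : 0 < N := by omega
  have hNr : (0:ℝ) < N := by exact_mod_cast hNpos
  have hsq : 0 < Real.sqrt (2 * ε) := Real.sqrt_pos.mpr (by linarith)
  have hstep : Θ / N ≤ Real.sqrt (2 * ε) := by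
    have h1 : Real.pi / Real.sqrt (2 * ε) ≤ N := by
      calc Real.pi / Real.sqrt (2 * ε) ≤ ⌈Real.pi / Real.sqrt (2 * ε)⌉₊ := Nat.le_ceil _
      _ ≤ N := by exact_mod_cast Nat.le_succ _
    calc Θ / N ≤ Real.pi / N := by
          exact div_le_div_of_nonneg_right hΘπ (le_of_lt hNr)
      _ ≤ Real.sqrt (2 * ε) := by
          rw [div_le_iff₀ hNr]
          calc Real.pi ≤ Real.pi / Real.sqrt (2 * ε) * Real.sqrt (2 * ε) := by
                rw [div_mul_cancel₀ _ (ne_of_gt hsq)]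
            _ ≤ N * Real.sqrt (2 * ε) := by
                apply mul_le_mul_of_nonneg_right h1 (le_of_lt hsq)
            _ = Real.sqrt (2 * ε) * N := by ring
  have hstep0 : 0 ≤ Θ / N := div_nonneg hΘ0 (le_of_lt hNr)
  have hcos : 1 - ε ≤ Real.cos (Θ / N) := by
    have h2 : (Θ / N) ^ 2 ≤ 2 * ε := by
      calc (Θ / N) ^ 2 ≤ Real.sqrt (2 * ε) ^ 2 := by
            apply pow_le_pow_left₀ hstep0 hstep
        _ = 2 * ε := Real.sq_sqrt (by linarith)
    calc 1 - ε = 1 - 2 * ε / 2 := by ring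
      _ ≤ 1 - (Θ / N) ^ 2 / 2 := by linarith
      _ ≤ Real.cos (Θ / N) := Real.one_sub_sq_div_two_le_cos
  -- the chain
  have main : ∀ i : ℕ, i ≤ N →
      R (r • (Real.cos 0 • e + Real.sin 0 • n)) =
      R (r • (Real.cos (i * (Θ / N)) • e + Real.sin (i * (Θ / N)) • n)) := by
    intro i
    induction i with
    | zero => intro _; norm_num
    | succ i ih =>
      intro hiN
      have h1 := ih (by omega)
      rw [h1]
      apply hclose _ _ r hr
      · rw [norm_smul, Real.norm_eq_abs, abs_of_pos hr, hnorm, mul_one]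
      · rw [norm_smul, Real.norm_eq_abs, abs_of_pos hr, hnorm, mul_one]
      · rw [real_inner_smul_left, real_inner_smul_right, hip]
        have harg : (i : ℝ) * (Θ / N) - (i + 1 : ℕ) * (Θ / N) = -(Θ / N) := by
          push_cast; ring
        rw [harg, Real.cos_neg]
        have hc1 : 1 + Real.cos (Θ / N) ≥ 2 / K := by
          have : 1 - ε = 2 / K - 1 := by rw [hε]; ring
          linarith [hcos, this ▸ hcos]
        have h2 : K * (r ^ 2 * (2 / K)) = 2 * r ^ 2 := by field_simp
        have h3 : r ^ 2 * (2 / K) ≤ r ^ 2 + r * (r * Real.cos (Θ / N)) := by nlinarith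
        calc 2 * r ^ 2 = K * (r ^ 2 * (2 / K)) := h2.symm
          _ ≤ K * (r ^ 2 + r * (r * Real.cos (Θ / N))) := by
              apply mul_le_mul_of_nonneg_left h3 (le_of_lt hK0)
  have hfin := main N (le_refl N)
  have hNΘ : (N : ℝ) * (Θ / N) = Θ := by field_simp
  rw [hNΘ] at hfin
  simpa using hfin

lemma stmt8_rad (q c : ℝ) (R : EuclideanSpace ℝ (Fin d) → ℝ) (hq : 0 < q) (hc : 0 < c)
    (hclose : ∀ w w' : EuclideanSpace ℝ (Fin d), ∀ r : ℝ, 0 < r → ‖w‖ = r → ‖w'‖ = r →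
      2 * r ^ 2 ≤ (1 + c ^ 2 / q ^ 2) * (r ^ 2 + (inner ℝ w w' : ℝ)) → R w = R w')
    (hortho : ∀ w w' : EuclideanSpace ℝ (Fin d),
      ∃ e : EuclideanSpace ℝ (Fin d), ‖e‖ = 1 ∧ (inner ℝ w e : ℝ) = 0 ∧ (inner ℝ w' e : ℝ) = 0)
    (w w' : EuclideanSpace ℝ (Fin d)) (hw : w ≠ 0) (heq : ‖w‖ = ‖w'‖) :
    R w = R w' := by
  have hr : 0 < ‖w‖ := norm_pos_iff.mpr hw
  set r : ℝ := ‖w‖ with hrdef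
  set e : EuclideanSpace ℝ (Fin d) := r⁻¹ • w with he
  set e' : EuclideanSpace ℝ (Fin d) := r⁻¹ • w' with he'
  have he1 : ‖e‖ = 1 := by
    rw [he, norm_smul, Real.norm_eq_abs, abs_of_pos (inv_pos.mpr hr),
      inv_mul_cancel₀ (ne_of_gt hr)]
  have he'1 : ‖e'‖ = 1 := by
    rw [he', norm_smul, Real.norm_eq_abs, abs_of_pos (inv_pos.mpr hr), ← heq,
      inv_mul_cancel₀ (ne_of_gt hr)]
  have hre : r • e = w := by rw [he, smul_smul, mul_inv_cancel₀ (ne_of_gt hr), one_smul]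
  have hre' : r • e' = w' := by rw [he', smul_smul, mul_inv_cancel₀ (ne_of_gt hr), one_smul]
  clear_value r e e'
  set p : ℝ := (inner ℝ e e' : ℝ) with hp
  have hple : p ≤ 1 := by
    have := real_inner_le_norm e e'
    rw [he1, he'1] at this; simpa [hp] using this
  have hpge : -1 ≤ p := by
    have := abs_real_inner_le_norm e e'
    rw [he1, he'1] at this
    have := abs_le.mp (by simpa using this)
    exact this.1
  have key : R (r • e) = R (r • e') := by
    by_cases h1 : e' = e
    · rw [h1]
    by_cases h2 : e' = -e
    · obtain ⟨n, hn1, hen, -⟩ := hortho e e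
      have hu := stmt8_radunit q c R hq hc hclose r hr e n he1 hn1 hen Real.pi
        (le_of_lt Real.pi_pos) (le_refl _)
      have : Real.cos Real.pi • e + Real.sin Real.pi • n = -e := by
        rw [Real.cos_pi, Real.sin_pi]; simp
      rw [this] at hu
      rw [h2]; exact hu
    · -- strict case
      have hlt : p < 1 := by
        rcases lt_or_eq_of_le hple with h | h
        · exact h
        · exfalso
          have : ‖e - e'‖ ^ 2 = 0 := by
            rw [norm_sub_sq_real, he1, he'1, ← hp, h]; ring
          have : e - e' = 0 := by
            have hn := (pow_eq_zero_iff (by norm_num : 2 ≠ 0)).mp this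
            exact norm_eq_zero.mp hn
          exact h1 (by rw [← sub_eq_zero]; rw [← neg_sub e e', this, neg_zero])
      have hgt : -1 < p := by
        rcases lt_or_eq_of_le hpge with h | h
        · exact h
        · exfalso
          have : ‖e + e'‖ ^ 2 = 0 := by
            rw [norm_add_sq_real, he1, he'1, ← hp, ← h]; ring
          have : e + e' = 0 := by
            have hn := (pow_eq_zero_iff (by norm_num : 2 ≠ 0)).mp this
            exact norm_eq_zero.mp hn
          exact h2 (by rw [← neg_eq_iff_add_eq_zero.mpr this])
      set σ : ℝ := Real.sqrt (1 - p ^ 2) with hσdef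
      have hσpos : 0 < σ := Real.sqrt_pos.mpr (by nlinarith)
      have hσ2 : σ ^ 2 = 1 - p ^ 2 := Real.sq_sqrt (by nlinarith)
      set n : EuclideanSpace ℝ (Fin d) := σ⁻¹ • (e' - p • e) with hn
      clear_value n
      have hPP : (inner ℝ e' e : ℝ) = p := (real_inner_comm e' e).symm.trans hp.symm
      have hsub : ‖e' - p • e‖ = σ := by
        have h2 : ‖e' - p • e‖ ^ 2 = σ ^ 2 := by
          rw [norm_sub_sq_real, real_inner_smul_right, hPP, norm_smul, Real.norm_eq_abs, mul_pow,
            sq_abs, he1, he'1, hσ2]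
          ring
        exact (pow_left_inj₀ (norm_nonneg _) (le_of_lt hσpos) (by norm_num)).mp h2
      have hn1 : ‖n‖ = 1 := by
        rw [hn, norm_smul, Real.norm_eq_abs, abs_of_pos (inv_pos.mpr hσpos), hsub,
          inv_mul_cancel₀ (ne_of_gt hσpos)]
      have hen : (inner ℝ e n : ℝ) = 0 := by
        rw [hn, real_inner_smul_right, inner_sub_right, real_inner_smul_right,
          real_inner_self_eq_norm_sq, he1, ← hp]
        ring
      have hrecon : Real.cos (Real.arccos p) • e + Real.sin (Real.arccos p) • n = e' := by
        rw [Real.cos_arccos hpge hple, Real.sin_arccos, ← hσdef, hn, smul_smul,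
          mul_inv_cancel₀ (ne_of_gt hσpos), one_smul]
        abel
      have hu := stmt8_radunit q c R hq hc hclose r hr e n he1 hn1 hen (Real.arccos p)
        (Real.arccos_nonneg p) (Real.arccos_le_pi p)
      rw [hrecon] at hu
      exact hu
  rw [hre, hre'] at key
  exact key

theorem stmt8_aux (hd : 3 ≤ d) (q c : ℝ) (hq : 0 < q) (hc : 0 < c)
    (R : EuclideanSpace ℝ (Fin d) → ℝ)
    (hR : ∀ α : ℝ, 0 < α → ∀ w : EuclideanSpace ℝ (Fin d), ‖w‖ = α * q →
      ∀ v : EuclideanSpace ℝ (Fin d), ‖v‖ = α * c → (inner ℝ w v : ℝ) = 0 →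
        R w = R (w + v) ∧ ∀ β : ℝ, 0 ≤ β → R w ≤ R (w + β • v)) :
    ∀ w w' : EuclideanSpace ℝ (Fin d), w ≠ 0 → w' ≠ 0 → R w = R w' := by
  intro w w' hw hw'
  have hortho := stmt8_ortho hd
  have hkey : ∀ a u : EuclideanSpace ℝ (Fin d), a ≠ 0 → (inner ℝ a u : ℝ) = ‖a‖ ^ 2 →
      ‖u‖ ^ 2 = (1 + c ^ 2 / q ^ 2) * ‖a‖ ^ 2 → R a = R u :=
    fun a u h h1 h2 => stmt8_key q c R hq hc hR a u h h1 h2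
  have hclose : ∀ a b : EuclideanSpace ℝ (Fin d), ∀ r : ℝ, 0 < r → ‖a‖ = r → ‖b‖ = r →
      2 * r ^ 2 ≤ (1 + c ^ 2 / q ^ 2) * (r ^ 2 + (inner ℝ a b : ℝ)) → R a = R b :=
    fun a b r hr h1 h2 h3 => stmt8_close hd q c R hq hc hkey hortho a b r hr h1 h2 h3
  have hrad : ∀ a b : EuclideanSpace ℝ (Fin d), a ≠ 0 → ‖a‖ = ‖b‖ → R a = R b :=
    fun a b h h2 => stmt8_rad q c R hq hc hclose hortho a b h h2
  -- monotonicity in the norm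
  have hmono : ∀ u u' : EuclideanSpace ℝ (Fin d), u ≠ 0 → u' ≠ 0 → ‖u‖ ≤ ‖u'‖ →
      R u ≤ R u' := by
    intro u u' hu hu' hle
    obtain ⟨e, he1, heu, -⟩ := hortho u u
    have hsq : 0 ≤ ‖u'‖ ^ 2 - ‖u‖ ^ 2 := by
      nlinarith [pow_le_pow_left₀ (norm_nonneg u) hle 2]
    obtain ⟨t, ht2⟩ : ∃ t : ℝ, t ^ 2 = ‖u'‖ ^ 2 - ‖u‖ ^ 2 :=
      ⟨Real.sqrt _, Real.sq_sqrt hsq⟩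
    have hiz : (inner ℝ u (u + t • e) : ℝ) = ‖u‖ ^ 2 := by
      rw [inner_add_right, real_inner_smul_right, heu, real_inner_self_eq_norm_sq]; ring
    have h1 : R u ≤ R (u + t • e) := stmt8_mono q c R hq hc hR u (u + t • e) hu hiz
    have hnz2 : ‖u + t • e‖ ^ 2 = ‖u'‖ ^ 2 := by
      rw [norm_add_sq_real, real_inner_smul_right, heu, norm_smul, Real.norm_eq_abs, mul_pow,
        sq_abs, he1, ht2]
      ring
    have hnz : ‖u + t • e‖ = ‖u'‖ :=
      (pow_left_inj₀ (norm_nonneg _) (norm_nonneg _) (by norm_num)).mp hnz2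
    have hz0 : u + t • e ≠ 0 := by
      intro h0
      rw [h0, norm_zero] at hnz
      exact hu' (norm_eq_zero.mp hnz.symm)
    have h2 : R (u + t • e) = R u' := hrad _ u' hz0 hnz
    linarith
  -- one scaling step
  have hscale : ∀ u : EuclideanSpace ℝ (Fin d), u ≠ 0 →
      ∃ z : EuclideanSpace ℝ (Fin d), z ≠ 0 ∧ ‖z‖ ^ 2 = (1 + c ^ 2 / q ^ 2) * ‖u‖ ^ 2 ∧
        R u = R z := by
    intro u hu
    obtain ⟨e, he1, heu, -⟩ := hortho u u
    have hun : 0 < ‖u‖ := norm_pos_iff.mpr hu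
    have hiz : (inner ℝ u (u + ((‖u‖ / q) * c) • e) : ℝ) = ‖u‖ ^ 2 := by
      rw [inner_add_right, real_inner_smul_right, heu, real_inner_self_eq_norm_sq]; ring
    have hnz : ‖u + ((‖u‖ / q) * c) • e‖ ^ 2 = (1 + c ^ 2 / q ^ 2) * ‖u‖ ^ 2 := by
      rw [norm_add_sq_real, real_inner_smul_right, heu, norm_smul, Real.norm_eq_abs, mul_pow,
        sq_abs, he1]
      field_simp
      ring
    have hz0 : u + ((‖u‖ / q) * c) • e ≠ 0 := by
      intro h0
      have : (0:ℝ) < ‖u + ((‖u‖ / q) * c) • e‖ ^ 2 := by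
        rw [hnz]; positivity
      rw [h0, norm_zero] at this
      norm_num at this
    exact ⟨_, hz0, hnz, hkey u _ hu hiz hnz⟩
  -- iterated scaling
  have hscalen : ∀ m : ℕ, ∀ u : EuclideanSpace ℝ (Fin d), u ≠ 0 →
      ∃ z : EuclideanSpace ℝ (Fin d), z ≠ 0 ∧
        ‖z‖ ^ 2 = (1 + c ^ 2 / q ^ 2) ^ m * ‖u‖ ^ 2 ∧ R u = R z := by
    intro m
    induction m with
    | zero => intro u hu; exact ⟨u, hu, by simp, rfl⟩
    | succ m ih =>
      intro u hu
      obtain ⟨z, hz0, hzn, hzr⟩ := ih u hu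
      obtain ⟨z', hz'0, hz'n, hz'r⟩ := hscale z hz0
      exact ⟨z', hz'0, by rw [hz'n, hzn]; ring, hzr.trans hz'r⟩
  -- R u ≤ R u' always
  have hle : ∀ u u' : EuclideanSpace ℝ (Fin d), u ≠ 0 → u' ≠ 0 → R u ≤ R u' := by
    intro u u' hu hu'
    have hK1 : 1 < 1 + c ^ 2 / q ^ 2 := by
      have : 0 < c ^ 2 / q ^ 2 := by positivity
      linarith
    obtain ⟨m, hm⟩ := pow_unbounded_of_one_lt (‖u‖ ^ 2 / ‖u'‖ ^ 2) hK1
    obtain ⟨z, hz0, hzn, hzr⟩ := hscalen m u' hu'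
    have hn' : 0 < ‖u'‖ := norm_pos_iff.mpr hu'
    have hsqle : ‖u‖ ^ 2 ≤ ‖z‖ ^ 2 := by
      rw [hzn]
      rw [div_lt_iff₀ (by positivity : (0:ℝ) < ‖u'‖ ^ 2)] at hm
      linarith
    have hnormle : ‖u‖ ≤ ‖z‖ :=
      (pow_le_pow_iff_left₀ (norm_nonneg u) (norm_nonneg z) (by norm_num)).mp hsqle
    calc R u ≤ R z := hmono u z hu hz0 hnormle
      _ = R u' := hzr.symm
  exact le_antisymm (hle w w' hw hw') (hle w' w hw' hw)


/-- Constancy lemma: if `R : ℝ^d → ℝ` (with `d ≥ 3`) satisfies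
`R(w) = R(w+v) = min_{β ≥ 0} R(w + βv)` for every `α > 0`, `‖w‖ = αq`, `‖v‖ = αc`,
`⟨w,v⟩ = 0`, then `R` is constant on `ℝ^d ∖ {0}`. -/
theorem stmt8 {d : ℕ} (hd : 3 ≤ d) (q c : ℝ) (hq : 0 < q) (hc : 0 < c)
    (R : EuclideanSpace ℝ (Fin d) → ℝ)
    (hR : ∀ α : ℝ, 0 < α → ∀ w : EuclideanSpace ℝ (Fin d), ‖w‖ = α * q →
      ∀ v : EuclideanSpace ℝ (Fin d), ‖v‖ = α * c → (inner ℝ w v : ℝ) = 0 →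
        R w = R (w + v) ∧ ∀ β : ℝ, 0 ≤ β → R w ≤ R (w + β • v)) :
    ∀ w w' : EuclideanSpace ℝ (Fin d), w ≠ 0 → w' ≠ 0 → R w = R w' := by
  exact stmt8_aux hd q c hq hc R hR
end

section
/- Piecewise trajectory for the concatenated linear flows: let X̃ ∈ ℝ^{2×2} have rows (3,-1), (4,2), let a ∈ (4,5), b ∈ (0,1), α > 0, and define w̃(t) = α(5,-1)ᵀ + exp(-(t-t₁)X̃ᵀX̃)(α(a,b)ᵀ - α(5,-1)ᵀ) for t ≥ t₁. Then for all t ≥ t₁: ⟨(3,-1), w̃(t)⟩ ≥ 0 and ⟨(4,2), w̃(t)⟩ ≥ 0, and lim_{t→∞} w̃(t) = α(5,-1)ᵀ. -/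
open Matrix Filter

noncomputable def rr : ℝ := Real.sqrt 5
noncomputable def PP : Matrix (Fin 2) (Fin 2) ℝ := !![1, 1; -2-rr, -2+rr]
noncomputable def QQ : Matrix (Fin 2) (Fin 2) ℝ := (2*rr)⁻¹ • !![rr-2, -1; rr+2, 1]

lemma hr2 : rr ^ 2 = 5 := Real.sq_sqrt (by norm_num)
lemma hr0 : 0 < rr := Real.sqrt_pos.2 (by norm_num)
lemma hrlb : 2 < rr := by nlinarith [hr2, hr0]
lemma hrub : rr < 3 := by nlinarith [hr2, hr0]

lemma diag2 (x y : ℝ) : Matrix.diagonal ![x, y] = !![x, 0; 0, y] := by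
  ext i j; fin_cases i <;> fin_cases j <;> simp [Matrix.diagonal]

lemma hPQ : PP * QQ = 1 := by
  have h2 := hr2; have h0 := hr0
  ext i j; fin_cases i <;> fin_cases j <;>
    simp [PP, QQ, Matrix.mul_apply, Fin.sum_univ_two, Matrix.smul_apply] <;>
    field_simp <;> nlinarith [h2, h0]

lemma hQP : QQ * PP = 1 := by
  have h2 := hr2; have h0 := hr0
  ext i j; fin_cases i <;> fin_cases j <;>
    simp [PP, QQ, Matrix.mul_apply, Fin.sum_univ_two, Matrix.smul_apply] <;>
    field_simp <;> nlinarith [h2, h0]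

lemma hPinv : PP⁻¹ = QQ := inv_eq_right_inv hPQ
lemma hPunit : IsUnit PP := isUnit_iff_exists.2 ⟨QQ, hPQ, hQP⟩

lemma keyExp (s : ℝ) :
    NormedSpace.exp (-(s • ((!![3, -1; 4, 2] : Matrix (Fin 2) (Fin 2) ℝ)ᵀ * !![3, -1; 4, 2]))) =
      PP * !![Real.exp (-(s*(15-5*rr))), 0; 0, Real.exp (-(s*(15+5*rr)))] * QQ := by
  have h2 := hr2; have h0 := hr0
  have hM : -(s • ((!![3, -1; 4, 2] : Matrix (Fin 2) (Fin 2) ℝ)ᵀ * !![3, -1; 4, 2])) =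
      PP * Matrix.diagonal ![-(s*(15-5*rr)), -(s*(15+5*rr))] * QQ := by
    rw [diag2]
    ext i j; fin_cases i <;> fin_cases j <;>
      simp [PP, QQ, Matrix.mul_apply, Fin.sum_univ_two, Matrix.smul_apply,
        Matrix.transpose] <;>
      field_simp <;> ring_nf <;>
      simp (config := {failIfUnchanged := false}) only [show rr^4 = 25 by nlinarith, show rr^3 = 5*rr by nlinarith, h2] <;> ring
  have hdiag : (NormedSpace.exp (![-(s*(15-5*rr)), -(s*(15+5*rr))] : Fin 2 → ℝ)) =
      ![Real.exp (-(s*(15-5*rr))), Real.exp (-(s*(15+5*rr)))] := by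
    rw [Pi.exp_def]; funext i; fin_cases i <;> simp [← Real.exp_eq_exp_ℝ]
  rw [hM, ← hPinv, Matrix.exp_conj PP _ hPunit, Matrix.exp_diagonal, hdiag, hPinv, diag2]

lemma core1 (a b r E1 E2 : ℝ) (ha : 4 < a) (ha' : a < 5) (hb : 0 < b) (hb' : b < 1)
    (h2 : r^2 = 5) (hlb : 2 < r) (hub : r < 3)
    (hE1 : 0 < E1) (hE1' : E1 ≤ 1) (hE2 : 0 < E2) (hE2' : E2 ≤ 1) :
    0 ≤ 32*r + (a-5)*((5+r)*(r-2)*E1 + (3*r+10-r^2)*E2) + (b+1)*(-(5+r)*E1 + (5-r)*E2) := by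
  have hgoal : 32*r + (a-5)*((5+r)*(r-2)*E1 + (3*r+10-r^2)*E2) + (b+1)*(-(5+r)*E1 + (5-r)*E2)
      = 32*r + ((a-5)*(3*r-5))*E1 + ((a-5)*(3*r+5))*E2 - ((b+1)*(5+r))*E1 + ((b+1)*(5-r))*E2 := by
    linear_combination ((a-5)*E1 - (a-5)*E2) * h2
  rw [hgoal]
  have u1 : 0 ≤ (5-a)*E1 := mul_nonneg (by linarith) hE1.le
  have u1' : (5-a)*E1 ≤ 1 := by nlinarith
  have u2 : 0 ≤ (5-a)*E2 := mul_nonneg (by linarith) hE2.le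
  have u2' : (5-a)*E2 ≤ 1 := by nlinarith
  have t1 : -(3*r-5) ≤ (a-5)*(3*r-5)*E1 := by nlinarith
  have t2 : -(3*r+5) ≤ (a-5)*(3*r+5)*E2 := by nlinarith
  have v1 : 0 ≤ (b+1)*E1 := mul_nonneg (by linarith) hE1.le
  have v1' : (b+1)*E1 ≤ 2 := by nlinarith
  have t3 : (b+1)*(5+r)*E1 ≤ 2*(5+r) := by
    nlinarith [mul_nonneg (show (0:ℝ) ≤ 2-(b+1)*E1 by linarith) (show (0:ℝ) ≤ 5+r by linarith)]
  have t4 : 0 ≤ (b+1)*(5-r)*E2 := by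
    apply mul_nonneg (mul_nonneg (by linarith) (by linarith)) hE2.le
  linarith

lemma core2 (a b r E1 E2 : ℝ) (ha : 4 < a) (ha' : a < 5) (hb : 0 < b) (hb' : b < 1)
    (h2 : r^2 = 5) (hlb : 2 < r) (hub : r < 3)
    (hE1 : 0 < E1) (hE1' : E1 ≤ 1) (hE2 : 0 < E2) (hE2' : E2 ≤ 1) :
    0 ≤ 36*r + (a-5)*((r-2)*(-2*r)*E1 + (r+2)*(2*r)*E2) + (b+1)*(2*r*E1 + 2*r*E2) := by
  have t1 : 0 ≤ (5-a)*((r-2)*(2*r))*E1 := by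
    apply mul_nonneg (mul_nonneg (by linarith) (by nlinarith)) hE1.le
  have u2 : 0 ≤ (5-a)*E2 := mul_nonneg (by linarith) hE2.le
  have u2' : (5-a)*E2 ≤ 1 := by nlinarith
  have t2 : -(10+4*r) ≤ (a-5)*((r+2)*(2*r))*E2 := by nlinarith
  have t3 : 0 ≤ (b+1)*(2*r*E1) := by positivity
  have t4 : 0 ≤ (b+1)*(2*r*E2) := by positivity
  nlinarith [t1, t2, t3, t4]

/-- Second part of the piecewise trajectory: with `X̃` having rows `(3,-1)` and `(4,2)`,
`a ∈ (4,5)`, `b ∈ (0,1)`, the curve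
`w̃(t) = α(5,-1) + exp(-(t-t₁) X̃ᵀX̃)(α(a,b) - α(5,-1))` satisfies
`⟨(3,-1), w̃(t)⟩ ≥ 0` and `⟨(4,2), w̃(t)⟩ ≥ 0` for all `t ≥ t₁`, and converges to
`α(5,-1)` as `t → ∞`. -/
theorem stmt17 (α a b t₁ : ℝ) (hα : 0 < α) (ha : 4 < a) (ha' : a < 5)
    (hb : 0 < b) (hb' : b < 1)
    (X : Matrix (Fin 2) (Fin 2) ℝ) (hX : X = !![3, -1; 4, 2])
    (w : ℝ → Fin 2 → ℝ)
    (hw : ∀ t : ℝ, w t = α • ![5, -1]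
      + (NormedSpace.exp (-((t - t₁) • (Xᵀ * X)))) *ᵥ (α • ![a, b] - α • ![5, -1])) :
    (∀ t : ℝ, t₁ ≤ t → 0 ≤ ![3, -1] ⬝ᵥ w t ∧ 0 ≤ ![4, 2] ⬝ᵥ w t)
    ∧ Tendsto w atTop (nhds (α • ![5, -1])) := by
  subst hX
  have h2 := hr2; have h0 := hr0; have hlb := hrlb; have hub := hrub
  set e1 : ℝ → ℝ := fun t => Real.exp (-((t - t₁)*(15-5*rr))) with he1def
  set e2 : ℝ → ℝ := fun t => Real.exp (-((t - t₁)*(15+5*rr))) with he2def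
  have hw0 : ∀ t : ℝ, w t 0 = 5*α +
      ((α*(a-5)*(rr-2) - α*(b+1)) * e1 t + (α*(a-5)*(rr+2) + α*(b+1)) * e2 t) / (2*rr) := by
    intro t
    rw [hw t, keyExp (t - t₁)]
    simp [PP, QQ, Matrix.mul_apply, Matrix.mulVec, dotProduct, Fin.sum_univ_two,
      Matrix.smul_apply]
    field_simp
    ring
  have hw1 : ∀ t : ℝ, w t 1 = -α +
      ((α*(a-5)*(rr-2)*(-2-rr) + α*(b+1)*(2+rr)) * e1 t
        + (α*(a-5)*(rr+2)*(-2+rr) + α*(b+1)*(rr-2)) * e2 t) / (2*rr) := by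
    intro t
    rw [hw t, keyExp (t - t₁)]
    simp [PP, QQ, Matrix.mul_apply, Matrix.mulVec, dotProduct, Fin.sum_univ_two,
      Matrix.smul_apply]
    field_simp
    ring
  constructor
  · intro t ht
    have hs : 0 ≤ t - t₁ := by linarith
    have hE1 : 0 < e1 t := Real.exp_pos _
    have hE2 : 0 < e2 t := Real.exp_pos _
    have hE1' : e1 t ≤ 1 := by
      apply Real.exp_le_one_iff.2; nlinarith
    have hE2' : e2 t ≤ 1 := by
      apply Real.exp_le_one_iff.2; nlinarith
    set E1 := e1 t
    set E2 := e2 t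
    constructor
    · have hrew : ![3, -1] ⬝ᵥ w t =
          (32*rr*α + α*(a-5)*((5+rr)*(rr-2)*E1 + (3*rr+10-rr^2)*E2)
            + α*(b+1)*(-(5+rr)*E1 + (5-rr)*E2)) / (2*rr) := by
        simp [dotProduct, Fin.sum_univ_two, Matrix.vecHead, Matrix.vecTail]
        rw [hw0 t, hw1 t]
        field_simp
        ring
      rw [hrew]
      apply div_nonneg _ (by linarith)
      have hcore := core1 a b rr E1 E2 ha ha' hb hb' h2 hlb hub hE1 hE1' hE2 hE2'
      calc (0:ℝ) = α * 0 := by ring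
        _ ≤ α * (32*rr + (a-5)*((5+rr)*(rr-2)*E1 + (3*rr+10-rr^2)*E2)
              + (b+1)*(-(5+rr)*E1 + (5-rr)*E2)) := by
            exact mul_le_mul_of_nonneg_left hcore hα.le
        _ = 32*rr*α + α*(a-5)*((5+rr)*(rr-2)*E1 + (3*rr+10-rr^2)*E2)
              + α*(b+1)*(-(5+rr)*E1 + (5-rr)*E2) := by ring
    · have hrew : ![4, 2] ⬝ᵥ w t =
          (36*rr*α + α*(a-5)*((rr-2)*(-2*rr)*E1 + (rr+2)*(2*rr)*E2)
            + α*(b+1)*(2*rr*E1 + 2*rr*E2)) / (2*rr) := by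
        simp [dotProduct, Fin.sum_univ_two, Matrix.vecHead, Matrix.vecTail]
        rw [hw0 t, hw1 t]
        field_simp
        ring
      rw [hrew]
      apply div_nonneg _ (by linarith)
      have hcore := core2 a b rr E1 E2 ha ha' hb hb' h2 hlb hub hE1 hE1' hE2 hE2'
      calc (0:ℝ) = α * 0 := by ring
        _ ≤ α * (36*rr + (a-5)*((rr-2)*(-2*rr)*E1 + (rr+2)*(2*rr)*E2)
              + (b+1)*(2*rr*E1 + 2*rr*E2)) := by
            exact mul_le_mul_of_nonneg_left hcore hα.le
        _ = 36*rr*α + α*(a-5)*((rr-2)*(-2*rr)*E1 + (rr+2)*(2*rr)*E2)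
              + α*(b+1)*(2*rr*E1 + 2*rr*E2) := by ring
  · have hlim : ∀ lam : ℝ, 0 < lam →
        Tendsto (fun t : ℝ => Real.exp (-((t - t₁) * lam))) atTop (nhds 0) := by
      intro lam hlam
      apply Real.tendsto_exp_atBot.comp
      apply tendsto_neg_atTop_atBot.comp
      have : Tendsto (fun t : ℝ => t - t₁) atTop atTop :=
        tendsto_atTop_add_const_right atTop (-t₁) tendsto_id
      exact this.atTop_mul_const hlam
    have hl1 : Tendsto e1 atTop (nhds 0) := hlim _ (by linarith)
    have hl2 : Tendsto e2 atTop (nhds 0) := hlim _ (by linarith)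
    rw [tendsto_pi_nhds]
    intro i
    fin_cases i
    · show Tendsto (fun t => w t 0) atTop (nhds ((α • ![(5:ℝ), -1]) 0))
      have hfun : (fun t => w t 0) = fun t => 5*α +
          ((α*(a-5)*(rr-2) - α*(b+1)) * e1 t + (α*(a-5)*(rr+2) + α*(b+1)) * e2 t) / (2*rr) :=
        funext hw0
      have hval : (α • ![(5:ℝ), -1]) 0 = 5*α +
          ((α*(a-5)*(rr-2) - α*(b+1)) * 0 + (α*(a-5)*(rr+2) + α*(b+1)) * 0) / (2*rr) := by
        simp; ring
      rw [hfun, hval]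
      exact tendsto_const_nhds.add
        (((tendsto_const_nhds.mul hl1).add (tendsto_const_nhds.mul hl2)).div_const _)
    · show Tendsto (fun t => w t 1) atTop (nhds ((α • ![(5:ℝ), -1]) 1))
      have hfun : (fun t => w t 1) = fun t => -α +
          ((α*(a-5)*(rr-2)*(-2-rr) + α*(b+1)*(2+rr)) * e1 t
            + (α*(a-5)*(rr+2)*(-2+rr) + α*(b+1)*(rr-2)) * e2 t) / (2*rr) :=
        funext hw1
      have hval : (α • ![(5:ℝ), -1]) 1 = -α +
          ((α*(a-5)*(rr-2)*(-2-rr) + α*(b+1)*(2+rr)) * 0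
            + (α*(a-5)*(rr+2)*(-2+rr) + α*(b+1)*(rr-2)) * 0) / (2*rr) := by
        simp
      rw [hfun, hval]
      exact tendsto_const_nhds.add
        (((tendsto_const_nhds.mul hl1).add (tendsto_const_nhds.mul hl2)).div_const _)
end

section
/- Existence of a simultaneous orthogonal perturbation point: let d ≥ 3, q, c > 0, α > 0, and let w, w' ∈ ℝ^d with ‖w‖ = ‖w'‖ = αq =: r and ε := ‖w - w'‖ ≤ 2rc'/√(1+c'²) where c' = c/q. Set u = ((w+w')/2)(1 + ε²/(4r² - ε²)) and let e be orthogonal to both w and w' with ‖e‖² = r²(c'² - ε²/(4r² - ε²)) (well-defined and such e exists since d ≥ 3). Then u* = u + e satisfies ‖u* - w‖ = ‖u* - w'‖ = αc and ⟨w, u* - w⟩ = ⟨w', u* - w'⟩ = 0. -/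
set_option maxHeartbeats 1000000 in
/-- Existence of a simultaneous orthogonal perturbation point: for `w, w'` of equal norm
`r = αq` with `ε = ‖w - w'‖` small enough, the point `u* = u + e`, where
`u = ((w+w')/2)(1 + ε²/(4r² - ε²))` and `e ⟂ w, w'` with
`‖e‖² = r²(c'² - ε²/(4r² - ε²))` (such `e` exists since `d ≥ 3`), satisfies
`‖u* - w‖ = ‖u* - w'‖ = αc` and `⟨w, u* - w⟩ = ⟨w', u* - w'⟩ = 0`. -/
theorem stmt19 {d : ℕ} (hd : 3 ≤ d) (q c α : ℝ) (hq : 0 < q) (hc : 0 < c) (hα : 0 < α)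
    (w w' : EuclideanSpace ℝ (Fin d))
    (hw : ‖w‖ = α * q) (hw' : ‖w'‖ = α * q)
    (hε : ‖w - w'‖ ≤ 2 * (α * q) * (c / q) / Real.sqrt (1 + (c / q) ^ 2)) :
    ∃ e : EuclideanSpace ℝ (Fin d),
      (inner ℝ w e : ℝ) = 0 ∧ (inner ℝ w' e : ℝ) = 0
      ∧ ‖e‖ ^ 2 = (α * q) ^ 2 * ((c / q) ^ 2 - ‖w - w'‖ ^ 2 / (4 * (α * q) ^ 2 - ‖w - w'‖ ^ 2))
      ∧ (∀ e' : EuclideanSpace ℝ (Fin d),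
          (inner ℝ w e' : ℝ) = 0 → (inner ℝ w' e' : ℝ) = 0 →
          ‖e'‖ ^ 2 = (α * q) ^ 2 * ((c / q) ^ 2 - ‖w - w'‖ ^ 2 / (4 * (α * q) ^ 2 - ‖w - w'‖ ^ 2)) →
          ∀ ustar : EuclideanSpace ℝ (Fin d),
            ustar = (1 + ‖w - w'‖ ^ 2 / (4 * (α * q) ^ 2 - ‖w - w'‖ ^ 2)) • ((2 : ℝ)⁻¹ • (w + w')) + e' →
            ‖ustar - w‖ = α * c ∧ ‖ustar - w'‖ = α * c
            ∧ (inner ℝ w (ustar - w) : ℝ) = 0 ∧ (inner ℝ w' (ustar - w') : ℝ) = 0) := by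
  have hr : (0:ℝ) < α * q := by positivity
  set r : ℝ := α * q with hr_def
  set ε : ℝ := ‖w - w'‖ with hε_def
  have hεnn : 0 ≤ ε := norm_nonneg _
  set c' : ℝ := c / q with hc'_def
  have hc' : 0 < c' := by positivity
  have hSpos : (0:ℝ) < Real.sqrt (1 + c' ^ 2) := Real.sqrt_pos.2 (by positivity)
  have hS2 : (Real.sqrt (1 + c' ^ 2)) ^ 2 = 1 + c' ^ 2 := Real.sq_sqrt (by positivity)
  have h1 : ε * Real.sqrt (1 + c' ^ 2) ≤ 2 * r * c' := by
    rw [le_div_iff₀ hSpos] at hε; exact hε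
  have hkey : ε ^ 2 * (1 + c' ^ 2) ≤ 4 * r ^ 2 * c' ^ 2 := by
    have h2 : (ε * Real.sqrt (1 + c' ^ 2)) ^ 2 ≤ (2 * r * c') ^ 2 :=
      pow_le_pow_left₀ (by positivity) h1 2
    nlinarith [h2, hS2]
  have h4 : ε ^ 2 < 4 * r ^ 2 := by nlinarith [sq_nonneg ε, sq_nonneg (ε * c'), sq_nonneg c', mul_pos hr hr]
  have h5 : (0:ℝ) < 4 * r ^ 2 - ε ^ 2 := by linarith
  have hTnn : 0 ≤ r ^ 2 * (c' ^ 2 - ε ^ 2 / (4 * r ^ 2 - ε ^ 2)) := by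
    have hle : ε ^ 2 / (4 * r ^ 2 - ε ^ 2) ≤ c' ^ 2 := by
      rw [div_le_iff₀ h5]; nlinarith
    have : 0 ≤ c' ^ 2 - ε ^ 2 / (4 * r ^ 2 - ε ^ 2) := by linarith
    exact mul_nonneg (sq_nonneg r) this
  -- existence of a nonzero vector orthogonal to w and w'
  obtain ⟨v, hv_mem, hv_ne⟩ : ∃ v ∈ (Submodule.span ℝ ({w, w'} : Set (EuclideanSpace ℝ (Fin d))))ᗮ, v ≠ 0 := by
    classical
    apply Submodule.exists_mem_ne_zero_of_ne_bot
    intro hbot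
    haveI : Fintype ({w, w'} : Set (EuclideanSpace ℝ (Fin d))) := Set.fintypeInsert _ _
    have hfin : Module.finrank ℝ (Submodule.span ℝ ({w, w'} : Set (EuclideanSpace ℝ (Fin d)))) ≤ 2 := by
      have := finrank_span_le_card (R := ℝ) ({w, w'} : Set (EuclideanSpace ℝ (Fin d)))
      refine this.trans ?_
      simp [Set.toFinset_insert]
      exact Finset.card_insert_le _ _
    have heq := Submodule.finrank_add_finrank_orthogonal
      (K := Submodule.span ℝ ({w, w'} : Set (EuclideanSpace ℝ (Fin d))))
    rw [hbot, finrank_bot] at heq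
    have : Module.finrank ℝ (EuclideanSpace ℝ (Fin d)) = d := by
      simp [finrank_euclideanSpace]
    omega
  have hvw : (inner ℝ w v : ℝ) = 0 := by
    have := hv_mem w (Submodule.subset_span (by simp))
    simpa [real_inner_comm] using this
  have hvw' : (inner ℝ w' v : ℝ) = 0 := by
    have := hv_mem w' (Submodule.subset_span (by simp))
    simpa [real_inner_comm] using this
  have hvnorm : (0:ℝ) < ‖v‖ := norm_pos_iff.2 hv_ne
  set T : ℝ := r ^ 2 * (c' ^ 2 - ε ^ 2 / (4 * r ^ 2 - ε ^ 2)) with hT_def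
  refine ⟨(Real.sqrt T / ‖v‖) • v, ?_, ?_, ?_, ?_⟩
  · simp [inner_smul_right, hvw]
  · simp [inner_smul_right, hvw']
  · rw [norm_smul]
    rw [Real.norm_eq_abs, abs_of_nonneg (by positivity)]
    rw [div_mul_cancel₀ _ (ne_of_gt hvnorm), Real.sq_sqrt hTnn]
  · intro e' he1 he2 he3 ustar hust
    have hp : (inner ℝ w w' : ℝ) = r ^ 2 - ε ^ 2 / 2 := by
      have := norm_sub_sq_real w w'
      rw [hw, hw'] at this
      linarith
    have he1' : (inner ℝ e' w : ℝ) = 0 := by rw [real_inner_comm]; exact he1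
    have he2' : (inner ℝ e' w' : ℝ) = 0 := by rw [real_inner_comm]; exact he2
    have hww : (inner ℝ w w : ℝ) = r ^ 2 := by
      rw [real_inner_self_eq_norm_sq, hw]
    have hww' : (inner ℝ w' w' : ℝ) = r ^ 2 := by
      rw [real_inner_self_eq_norm_sq, hw']
    have hp' : (inner ℝ w' w : ℝ) = r ^ 2 - ε ^ 2 / 2 := by rw [real_inner_comm]; exact hp
    have hiw : (inner ℝ w (ustar - w) : ℝ) = 0 := by
      rw [hust]
      simp only [inner_sub_right, inner_add_right, inner_smul_right, hww, hp, he1]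
      field_simp
      ring
    have hiw' : (inner ℝ w' (ustar - w') : ℝ) = 0 := by
      rw [hust]
      simp only [inner_sub_right, inner_add_right, inner_smul_right, hww', hp', he2]
      field_simp
      ring
    have hαc : (0:ℝ) < α * c := by positivity
    have hrc : r * c' = α * c := by
      rw [hr_def, hc'_def]; field_simp
    have hn1 : ‖ustar - w‖ ^ 2 = (α * c) ^ 2 := by
      rw [← real_inner_self_eq_norm_sq, hust]
      simp only [inner_sub_left, inner_sub_right, inner_add_left, inner_add_right,
        inner_smul_left, inner_smul_right, RCLike.conj_to_real,
        hww, hww', hp, hp', he1, he2, he1', he2']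
      rw [real_inner_self_eq_norm_sq e', he3, hT_def, ← hrc]
      field_simp
      ring
    have hn2 : ‖ustar - w'‖ ^ 2 = (α * c) ^ 2 := by
      rw [← real_inner_self_eq_norm_sq, hust]
      simp only [inner_sub_left, inner_sub_right, inner_add_left, inner_add_right,
        inner_smul_left, inner_smul_right, RCLike.conj_to_real,
        hww, hww', hp, hp', he1, he2, he1', he2']
      rw [real_inner_self_eq_norm_sq e', he3, hT_def, ← hrc]
      field_simp
      ring
    refine ⟨?_, ?_, hiw, hiw'⟩
    · calc ‖ustar - w‖ = Real.sqrt (‖ustar - w‖ ^ 2) := (Real.sqrt_sq (norm_nonneg _)).symm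
        _ = Real.sqrt ((α * c) ^ 2) := by rw [hn1]
        _ = α * c := Real.sqrt_sq hαc.le
    · calc ‖ustar - w'‖ = Real.sqrt (‖ustar - w'‖ ^ 2) := (Real.sqrt_sq (norm_nonneg _)).symm
        _ = Real.sqrt ((α * c) ^ 2) := by rw [hn2]
        _ = α * c := Real.sqrt_sq hαc.le
end
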